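/- arXiv:2112.13101 — 4 statements merged into one kernel-verified Lean document; each statement's English description precedes it below -/
import Mathlib

section
/- Let $r:(0,1]\to[0,\infty)$ be a non-negative, non-decreasing function such that $r_{\lambda t}\le \sqrt{\lambda}\, r_t$ for all $\lambda\in(0,1]$ and $t\in(0,1]$. Then for all $t\in(0,1]$, $\varepsilon>0$ and $k\in\mathbb{N}$, $\int_0^t (t-s)^{-1} r_{t-s}^{\varepsilon}\, s^{-1} r_s^{k\varepsilon}\,ds \le B(\varepsilon/2,(k\varepsilon)/2)\, t^{-1} r_t^{(k+1)\varepsilon}$, where $B$ denotes the Beta function. -/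
open MeasureTheory Set

/-- The Euler Beta function `B(a,b) = ∫₀¹ u^(a-1) (1-u)^(b-1) du`. -/
noncomputable def Beta (a b : ℝ) : ℝ := ∫ u in (0:ℝ)..1, u ^ (a - 1) * (1 - u) ^ (b - 1)

lemma Beta_symm (a b : ℝ) : Beta a b = Beta b a := by
  unfold Beta
  have h := intervalIntegral.integral_comp_sub_left (a := 0) (b := 1)
    (fun u => u ^ (b - 1) * (1 - u) ^ (a - 1)) 1
  simp only [sub_zero, sub_self] at h
  rw [← h]
  apply intervalIntegral.integral_congr
  intro x _
  simp only [sub_sub_cancel]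
  ring

lemma Beta_nonneg {a b : ℝ} : 0 ≤ Beta a b := by
  apply intervalIntegral.integral_nonneg zero_le_one
  intro u hu
  exact mul_nonneg (Real.rpow_nonneg hu.1 _) (Real.rpow_nonneg (by linarith [hu.2]) _)

lemma beta_integrable {a b t : ℝ} (ha : 0 < a) (hb : 0 < b) (ht : 0 < t) :
    IntervalIntegrable (fun s => s ^ (a - 1) * (t - s) ^ (b - 1)) volume 0 t := by
  have h1 : IntervalIntegrable (fun s => s ^ (a - 1) * (t - s) ^ (b - 1)) volume 0 (t/2) := by
    apply IntervalIntegrable.mul_continuousOn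
    · exact intervalIntegral.intervalIntegrable_rpow' (by linarith)
    · apply ContinuousOn.rpow_const (by fun_prop)
      intro x hx
      rw [uIcc_of_le (by linarith)] at hx
      left; intro h; linarith [hx.2]
  have h2 : IntervalIntegrable (fun s => s ^ (a - 1) * (t - s) ^ (b - 1)) volume (t/2) t := by
    apply IntervalIntegrable.continuousOn_mul (g := fun s => s ^ (a-1))
      (f := fun s => (t - s) ^ (b - 1))
    · have h0 : IntervalIntegrable (fun s : ℝ => s ^ (b - 1)) volume 0 (t/2) :=
        intervalIntegral.intervalIntegrable_rpow' (by linarith)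
      have h3 := (h0.comp_sub_left t).symm
      simp only [sub_zero] at h3
      have : t - t/2 = t/2 := by ring
      rwa [this] at h3
    · apply ContinuousOn.rpow_const (by fun_prop)
      intro x hx
      rw [uIcc_of_le (by linarith)] at hx
      left; intro h; linarith [hx.1]
  exact h1.trans h2

lemma beta_value {a b t : ℝ} (ht : 0 < t) :
    ∫ s in (0:ℝ)..t, s ^ (a - 1) * (t - s) ^ (b - 1) = t ^ (a + b - 1) * Beta a b := by
  have h := intervalIntegral.integral_comp_mul_left (a := 0) (b := 1) (c := t)
    (f := fun s => s ^ (a - 1) * (t - s) ^ (b - 1)) ht.ne'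
  rw [mul_zero, mul_one, smul_eq_mul] at h
  have h2 : ∫ s in (0:ℝ)..t, s ^ (a - 1) * (t - s) ^ (b - 1)
      = t * ∫ x in (0:ℝ)..1, (t*x) ^ (a - 1) * (t - t*x) ^ (b - 1) := by
    rw [h, ← mul_assoc, mul_inv_cancel₀ ht.ne', one_mul]
  have h3 : ∫ x in (0:ℝ)..1, (t*x) ^ (a - 1) * (t - t*x) ^ (b - 1)
      = t ^ (a-1) * t ^ (b-1) * Beta a b := by
    unfold Beta
    rw [← intervalIntegral.integral_const_mul]
    apply intervalIntegral.integral_congr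
    intro x hx
    rw [uIcc_of_le zero_le_one] at hx; beta_reduce
    rw [show t - t*x = t*(1-x) by ring, Real.mul_rpow ht.le hx.1,
      Real.mul_rpow ht.le (by linarith [hx.2])]
    ring
  rw [h2, h3, show a + b - 1 = (a-1) + (b-1) + 1 by ring, Real.rpow_add ht,
    Real.rpow_add ht, Real.rpow_one]
  ring

lemma point_bound (r : ℝ → ℝ)
    (hr_nonneg : ∀ t ∈ Ioc (0:ℝ) 1, 0 ≤ r t)
    (hr_scale : ∀ l ∈ Ioc (0:ℝ) 1, ∀ t ∈ Ioc (0:ℝ) 1, r (l * t) ≤ Real.sqrt l * r t)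
    (t : ℝ) (ht : t ∈ Ioc (0:ℝ) 1) (c : ℝ) (hc : 0 < c)
    (x : ℝ) (hx0 : 0 < x) (hxt : x ≤ t) :
    x⁻¹ * r x ^ c ≤ x ^ (c/2 - 1) * (t ^ (-(c/2)) * r t ^ c) := by
  obtain ⟨ht0, ht1⟩ := ht
  have hx1 : x ≤ 1 := hxt.trans ht1
  have hsc := hr_scale (x/t) ⟨div_pos hx0 ht0, (div_le_one ht0).2 hxt⟩ t ⟨ht0, ht1⟩
  rw [div_mul_cancel₀ x ht0.ne'] at hsc
  have h1 : r x ^ c ≤ (Real.sqrt (x/t) * r t) ^ c :=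
    Real.rpow_le_rpow (hr_nonneg x ⟨hx0, hx1⟩) hsc hc.le
  have h2 : (Real.sqrt (x/t) * r t) ^ c = x ^ (c/2) * t ^ (-(c/2)) * r t ^ c := by
    rw [Real.mul_rpow (Real.sqrt_nonneg _) (hr_nonneg t ⟨ht0, ht1⟩), Real.sqrt_eq_rpow,
      ← Real.rpow_mul (div_nonneg hx0.le ht0.le), show (1:ℝ)/2*c = c/2 by ring,
      Real.div_rpow hx0.le ht0.le, Real.rpow_neg ht0.le, div_eq_mul_inv]
  calc x⁻¹ * r x ^ c ≤ x⁻¹ * (x ^ (c/2) * t ^ (-(c/2)) * r t ^ c) := by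
        apply mul_le_mul_of_nonneg_left _ (inv_nonneg.2 hx0.le)
        rw [← h2]; exact h1
    _ = x ^ (c/2 - 1) * (t ^ (-(c/2)) * r t ^ c) := by
        rw [Real.rpow_sub hx0, Real.rpow_one, div_eq_mul_inv]; ring

/-- If `r : (0,1] → [0,∞)` is non-negative, non-decreasing and satisfies
`r (λ t) ≤ √λ · r t`, then for all `t ∈ (0,1]`, `ε > 0` and `k ∈ ℕ`,
`∫₀ᵗ (t-s)⁻¹ r_{t-s}^ε s⁻¹ r_s^{kε} ds ≤ B(ε/2, kε/2) t⁻¹ r_t^{(k+1)ε}`. -/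
theorem stmt0 (r : ℝ → ℝ)
    (hr_nonneg : ∀ t ∈ Ioc (0:ℝ) 1, 0 ≤ r t)
    (hr_mono : ∀ s ∈ Ioc (0:ℝ) 1, ∀ t ∈ Ioc (0:ℝ) 1, s ≤ t → r s ≤ r t)
    (hr_scale : ∀ l ∈ Ioc (0:ℝ) 1, ∀ t ∈ Ioc (0:ℝ) 1, r (l * t) ≤ Real.sqrt l * r t)
    (t : ℝ) (ht : t ∈ Ioc (0:ℝ) 1) (ε : ℝ) (hε : 0 < ε) (k : ℕ) (hk : 1 ≤ k) :
    ∫ s in Ioo (0:ℝ) t, (t - s)⁻¹ * r (t - s) ^ ε * (s⁻¹ * r s ^ ((k : ℝ) * ε))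
      ≤ Beta (ε / 2) ((k : ℝ) * ε / 2) * (t⁻¹ * r t ^ (((k : ℝ) + 1) * ε)) := by
  obtain ⟨ht0, ht1⟩ := ht
  have hrt0 : 0 ≤ r t := hr_nonneg t ⟨ht0, ht1⟩
  have hkε : 0 < (k : ℝ) * ε := by
    have : (1:ℝ) ≤ (k:ℝ) := by exact_mod_cast hk
    nlinarith
  have hRHS0 : 0 ≤ Beta (ε / 2) ((k : ℝ) * ε / 2) * (t⁻¹ * r t ^ (((k : ℝ) + 1) * ε)) :=
    mul_nonneg Beta_nonneg (mul_nonneg (inv_nonneg.2 ht0.le) (Real.rpow_nonneg hrt0 _))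
  set a : ℝ := (k : ℝ) * ε / 2 with ha_def
  set b : ℝ := ε / 2 with hb_def
  have ha : 0 < a := by positivity
  have hb : 0 < b := by positivity
  set C : ℝ := t ^ (-(a+b)) * r t ^ (((k : ℝ) + 1) * ε) with hC_def
  set g : ℝ → ℝ := fun s => s ^ (a - 1) * (t - s) ^ (b - 1) * C with hg_def
  -- pointwise bound
  have hpt : ∀ s ∈ Ioo (0:ℝ) t,
      (t - s)⁻¹ * r (t - s) ^ ε * (s⁻¹ * r s ^ ((k : ℝ) * ε)) ≤ g s := by
    intro s hs
    obtain ⟨hs0, hst⟩ := hs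
    have hts : 0 < t - s := by linarith
    have hA := point_bound r hr_nonneg hr_scale t ⟨ht0, ht1⟩ ε hε (t - s) hts (by linarith)
    have hB := point_bound r hr_nonneg hr_scale t ⟨ht0, ht1⟩ ((k:ℝ)*ε) hkε s hs0 hst.le
    have hL1 : 0 ≤ s⁻¹ * r s ^ ((k : ℝ) * ε) :=
      mul_nonneg (inv_nonneg.2 hs0.le)
        (Real.rpow_nonneg (hr_nonneg s ⟨hs0, hst.le.trans ht1⟩) _)
    have hR1 : 0 ≤ (t-s) ^ (ε/2 - 1) * (t ^ (-(ε/2)) * r t ^ ε) :=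
      mul_nonneg (Real.rpow_nonneg hts.le _)
        (mul_nonneg (Real.rpow_nonneg ht0.le _) (Real.rpow_nonneg hrt0 _))
    calc (t - s)⁻¹ * r (t - s) ^ ε * (s⁻¹ * r s ^ ((k : ℝ) * ε))
        ≤ ((t-s) ^ (ε/2 - 1) * (t ^ (-(ε/2)) * r t ^ ε))
            * (s ^ ((k:ℝ)*ε/2 - 1) * (t ^ (-((k:ℝ)*ε/2)) * r t ^ ((k:ℝ)*ε))) :=
          mul_le_mul hA hB hL1 hR1
      _ = g s := by
          have hrt : r t ^ (((k:ℝ)+1)*ε) = r t ^ ε * r t ^ ((k:ℝ)*ε) := by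
            rw [show ((k:ℝ)+1)*ε = ε + (k:ℝ)*ε by ring,
              Real.rpow_add' hrt0 (by positivity)]
          have hT : t ^ (-(a+b)) = t ^ (-(ε/2)) * t ^ (-((k:ℝ)*ε/2)) := by
            rw [← Real.rpow_add ht0]
            congr 1
            rw [ha_def, hb_def]; ring
          simp only [hg_def, hC_def, hrt, hT]
          simp only [ha_def, hb_def]
          ring
  -- integrability of g
  have hgint : IntegrableOn g (Ioo 0 t) volume := by
    have h0 := (beta_integrable ha hb ht0).mul_const C
    rw [intervalIntegrable_iff_integrableOn_Ioo_of_le ht0.le] at h0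
    exact h0
  by_cases hf : IntegrableOn
      (fun s => (t - s)⁻¹ * r (t - s) ^ ε * (s⁻¹ * r s ^ ((k : ℝ) * ε))) (Ioo 0 t) volume
  · have hmono := setIntegral_mono_on hf hgint measurableSet_Ioo hpt
    refine hmono.trans_eq ?_
    have : ∫ s in Ioo (0:ℝ) t, g s = (t ^ (a + b - 1) * Beta a b) * C := by
      rw [← MeasureTheory.integral_Ioc_eq_integral_Ioo,
        ← intervalIntegral.integral_of_le ht0.le]
      rw [hg_def]
      simp only []
      rw [intervalIntegral.integral_mul_const, beta_value ht0]
    rw [this, hC_def]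
    rw [Beta_symm, show Beta b a = Beta (ε/2) ((k:ℝ)*ε/2) by rw [hb_def, ha_def]]
    rw [show t ^ (a+b-1) * Beta (ε/2) ((k:ℝ)*ε/2) * (t ^ (-(a+b)) * r t ^ (((k:ℝ)+1)*ε))
        = Beta (ε/2) ((k:ℝ)*ε/2) * ((t ^ (a+b-1) * t ^ (-(a+b))) * r t ^ (((k:ℝ)+1)*ε)) by ring]
    congr 2
    rw [← Real.rpow_add ht0, show a + b - 1 + -(a+b) = -1 by ring, Real.rpow_neg_one]
  · rw [MeasureTheory.integral_undef hf]
    exact hRHS0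
end

section
/- Let $d\in\mathbb{N}$ and let $\nu:[0,\infty)\to[0,\infty]$ be non-increasing with $\int_{\mathbb{R}^d}(1\wedge|x|^2)\nu(|x|)\,dx<\infty$. Define $h(r)=\int_{\mathbb{R}^d}(1\wedge |x|^2/r^2)\nu(|x|)\,dx$. Suppose there exist $\alpha_h\in(0,1)$ and $C_h\ge 1$ such that $h(r)\le C_h\lambda^{\alpha_h}h(\lambda r)$ for all $\lambda,r\in(0,1]$. Then for all $r\in(0,1]$, $\int_{r\le|z|<1}|z|\,\nu(|z|)\,dz \le \frac{2C_h}{1-\alpha_h}\, r^{\alpha_h} h(r)$. -/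
open MeasureTheory Set

set_option maxHeartbeats 2000000 in
/-- If `ν` is a non-increasing Lévy profile on `ℝ^d`,
`h(r) = ∫ (1 ∧ |x|²/r²) ν(|x|) dx` satisfies the weak scaling condition with
exponent `α_h ∈ (0,1)` and constant `C_h ≥ 1`, then for all `r ∈ (0,1]`,
`∫_{r ≤ |z| < 1} |z| ν(|z|) dz ≤ (2 C_h/(1-α_h)) r^{α_h} h(r)`. -/
theorem stmt2 (d : ℕ) (hd : 0 < d) (ν : ℝ → ℝ)
    (hν_nonneg : ∀ s, 0 ≤ ν s)
    (hν_anti : AntitoneOn ν (Ici 0))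
    (hν_int : Integrable (fun x : EuclideanSpace ℝ (Fin d) => min 1 (‖x‖ ^ 2) * ν ‖x‖))
    (h : ℝ → ℝ)
    (hh : ∀ ρ > (0:ℝ), h ρ = ∫ x : EuclideanSpace ℝ (Fin d), min 1 (‖x‖ ^ 2 / ρ ^ 2) * ν ‖x‖)
    (αh Ch : ℝ) (hα : αh ∈ Ioo (0:ℝ) 1) (hCh : 1 ≤ Ch)
    (hscal : ∀ l ∈ Ioc (0:ℝ) 1, ∀ ρ ∈ Ioc (0:ℝ) 1, h ρ ≤ Ch * l ^ αh * h (l * ρ))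
    (r : ℝ) (hr : r ∈ Ioc (0:ℝ) 1) :
    ∫ z in {z : EuclideanSpace ℝ (Fin d) | r ≤ ‖z‖ ∧ ‖z‖ < 1}, ‖z‖ * ν ‖z‖
      ≤ 2 * Ch / (1 - αh) * (r ^ αh * h r) := by
  obtain ⟨hα0, hα1⟩ := hα
  obtain ⟨hr0, hr1⟩ := hr
  have h1a : (0:ℝ) < 1 - αh := by linarith
  set E := EuclideanSpace ℝ (Fin d)
  -- measurability of ν ∘ norm
  have hν_meas : Measurable fun z : E => ν ‖z‖ := by
    have hanti : Antitone fun s : ℝ => ν (max s 0) := by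
      intro a b hab
      exact hν_anti (mem_Ici.2 (le_max_right a 0)) (mem_Ici.2 (le_max_right b 0))
        (max_le_max hab le_rfl)
    have h2 := hanti.measurable.comp (measurable_norm : Measurable fun z : E => ‖z‖)
    have h3 : (fun z : E => ν ‖z‖) = (fun s : ℝ => ν (max s 0)) ∘ norm :=
      funext fun z => by simp [Function.comp, max_eq_left (norm_nonneg z)]
    rw [h3]; exact h2
  set N : E → ENNReal := fun z => ENNReal.ofReal (ν ‖z‖) with hN
  have hN_meas : Measurable N := hν_meas.ennreal_ofReal
  -- integrability of the h-integrands
  have hint : ∀ ρ : ℝ, 0 < ρ →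
      Integrable (fun x : E => min 1 (‖x‖ ^ 2 / ρ ^ 2) * ν ‖x‖) := by
    intro ρ hρ
    apply (hν_int.const_mul (max 1 (1/ρ^2))).mono'
    · exact ((measurable_const.min ((measurable_norm.pow_const 2).div_const _)).mul
        hν_meas).aestronglyMeasurable
    · refine ae_of_all _ fun x => ?_
      have hx0 : (0:ℝ) ≤ ‖x‖ ^ 2 := sq_nonneg _
      have hm : (0:ℝ) ≤ min 1 (‖x‖ ^ 2 / ρ ^ 2) := le_min zero_le_one (by positivity)
      rw [Real.norm_eq_abs, abs_of_nonneg (mul_nonneg hm (hν_nonneg _))]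
      have hmin : min 1 (‖x‖ ^ 2 / ρ ^ 2) ≤ max 1 (1/ρ^2) * min 1 (‖x‖ ^ 2) := by
        rcases le_or_gt 1 (‖x‖ ^ 2) with hc | hc
        · rw [min_eq_left hc, mul_one]
          exact le_trans (min_le_left _ _) (le_max_left _ _)
        · rw [min_eq_right hc.le]
          calc min 1 (‖x‖ ^ 2 / ρ ^ 2) ≤ ‖x‖ ^ 2 / ρ ^ 2 := min_le_right _ _
            _ = (1/ρ^2) * ‖x‖ ^ 2 := by ring
            _ ≤ max 1 (1/ρ^2) * ‖x‖ ^ 2 := mul_le_mul_of_nonneg_right (le_max_right _ _) hx0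
      calc min 1 (‖x‖ ^ 2 / ρ ^ 2) * ν ‖x‖ ≤ (max 1 (1/ρ^2) * min 1 (‖x‖ ^ 2)) * ν ‖x‖ :=
            mul_le_mul_of_nonneg_right hmin (hν_nonneg _)
        _ = max 1 (1/ρ^2) * (min 1 (‖x‖ ^ 2) * ν ‖x‖) := by ring
  -- nonnegativity of h
  have hh_nonneg : ∀ ρ : ℝ, 0 < ρ → 0 ≤ h ρ := by
    intro ρ hρ
    rw [hh ρ hρ]
    exact integral_nonneg fun x => mul_nonneg (le_min zero_le_one (by positivity)) (hν_nonneg _)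
  -- key tail bound
  have key : ∀ t : ℝ, 0 < t → ∫⁻ z in {z : E | t ≤ ‖z‖}, N z ≤ ENNReal.ofReal (h t) := by
    intro t ht
    have hmeasS : MeasurableSet {z : E | t ≤ ‖z‖} :=
      measurableSet_le measurable_const measurable_norm
    rw [hh t ht, ofReal_integral_eq_lintegral_ofReal (hint t ht)
      (ae_of_all _ fun x => mul_nonneg (le_min zero_le_one (by positivity)) (hν_nonneg _))]
    rw [← lintegral_indicator hmeasS]
    apply lintegral_mono
    intro z
    by_cases hz : t ≤ ‖z‖
    · have hmin : min 1 (‖z‖ ^ 2 / t ^ 2) = 1 := by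
        apply min_eq_left
        rw [le_div_iff₀ (by positivity)]
        nlinarith [norm_nonneg z]
      simp only [indicator_of_mem (show z ∈ {z : E | t ≤ ‖z‖} from hz), hN, hmin, one_mul]
      exact le_rfl
    · rw [indicator_of_notMem (show z ∉ {z : E | t ≤ ‖z‖} from hz)]
      exact zero_le
  -- scaling consequence
  have hscale : ∀ t : ℝ, r ≤ t → t ≤ 1 → h t ≤ Ch * (r/t) ^ αh * h r := by
    intro t h1 h2
    have ht0 : 0 < t := lt_of_lt_of_le hr0 h1
    have := hscal (r/t) ⟨div_pos hr0 ht0, (div_le_one ht0).2 h1⟩ t ⟨ht0, h2⟩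
    rwa [div_mul_cancel₀ _ ht0.ne'] at this
  -- the annulus
  set A : Set E := {z : E | r ≤ ‖z‖ ∧ ‖z‖ < 1} with hAdef
  have hA : MeasurableSet A := by
    have : A = {z : E | r ≤ ‖z‖} ∩ {z : E | ‖z‖ < 1} := rfl
    rw [this]
    exact (measurableSet_le measurable_const measurable_norm).inter
      (measurableSet_lt measurable_norm measurable_const)
  -- integrability on the annulus
  have hIntA : IntegrableOn (fun z : E => ‖z‖ * ν ‖z‖) A := by
    apply ((hν_int.const_mul (1/r^2)).integrableOn).mono'
      ((measurable_norm.mul hν_meas).aestronglyMeasurable)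
    rw [ae_restrict_iff' hA]
    refine ae_of_all _ fun z hz => ?_
    obtain ⟨hz1, hz2⟩ := hz
    rw [Real.norm_eq_abs, Pi.mul_apply, abs_of_nonneg (mul_nonneg (norm_nonneg z) (hν_nonneg _))]
    have hmin : r ^ 2 ≤ min 1 (‖z‖ ^ 2) := le_min (by nlinarith) (by nlinarith)
    have : ‖z‖ * ν ‖z‖ ≤ ν ‖z‖ := by nlinarith [hν_nonneg ‖z‖, norm_nonneg z]
    calc ‖z‖ * ν ‖z‖ ≤ ν ‖z‖ := this
      _ ≤ 1/r^2 * (min 1 (‖z‖ ^ 2) * ν ‖z‖) := by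
          rw [div_mul_eq_mul_div, one_mul, le_div_iff₀ (by positivity)]
          nlinarith [hν_nonneg ‖z‖]
  -- reduce goal to a lintegral inequality
  have hH : 0 ≤ h r := hh_nonneg r hr0
  have hP0 : 0 ≤ r ^ αh := Real.rpow_nonneg hr0.le _
  have hRHS : 0 ≤ 2 * Ch / (1 - αh) * (r ^ αh * h r) := by
    apply mul_nonneg (by positivity) (mul_nonneg hP0 hH)
  rw [← ENNReal.ofReal_le_ofReal_iff hRHS,
    ofReal_integral_eq_lintegral_ofReal hIntA
      (ae_of_all _ fun z => mul_nonneg (norm_nonneg z) (hν_nonneg _))]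
  -- split the integrand
  have split : ∫⁻ z in A, ENNReal.ofReal (‖z‖ * ν ‖z‖)
      = (∫⁻ z in A, ENNReal.ofReal ((‖z‖ - r) * ν ‖z‖))
        + ∫⁻ z in A, ENNReal.ofReal (r * ν ‖z‖) := by
    rw [← lintegral_add_left (f := fun z : E => ENNReal.ofReal ((‖z‖ - r) * ν ‖z‖))
      (((measurable_norm.sub_const r).mul hν_meas).ennreal_ofReal)]
    refine setLIntegral_congr_fun hA (fun z hz => ?_)
    rw [← ENNReal.ofReal_add (mul_nonneg (by linarith [hz.1] : (0:ℝ) ≤ ‖z‖ - r) (hν_nonneg _))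
      (mul_nonneg hr0.le (hν_nonneg _))]
    congr 1
    ring
  -- second term
  have term2 : ∫⁻ z in A, ENNReal.ofReal (r * ν ‖z‖) ≤ ENNReal.ofReal (r * h r) := by
    have e : ∀ z : E, ENNReal.ofReal (r * ν ‖z‖) = ENNReal.ofReal r * N z := fun z =>
      ENNReal.ofReal_mul hr0.le
    rw [lintegral_congr e, lintegral_const_mul _ hN_meas, ENNReal.ofReal_mul hr0.le]
    exact mul_le_mul_right ((lintegral_mono_set fun z hz => hz.1).trans (key r hr0)) _
  -- first term via layer cake
  set μ' : Measure E := (volume.restrict A).withDensity N with hμ'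
  have hμ'app : ∀ s : Set E, MeasurableSet s → μ' s = ∫⁻ z in s ∩ A, N z := by
    intro s hs
    rw [hμ', withDensity_apply _ hs, Measure.restrict_restrict hs]
  have hQ1 : r ^ (1-αh) ≤ 1 := Real.rpow_le_one hr0.le hr1 (by linarith)
  have hQ0 : 0 ≤ r ^ (1-αh) := Real.rpow_nonneg hr0.le _
  have hX0 : 0 ≤ Ch * h r * (r ^ αh * ((1 - r ^ (1-αh)) / (1 - αh))) := by
    apply mul_nonneg (mul_nonneg (by linarith) hH)
    apply mul_nonneg hP0
    apply div_nonneg (by linarith) h1a.le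
  have term1 : ∫⁻ z in A, ENNReal.ofReal ((‖z‖ - r) * ν ‖z‖)
      ≤ ENNReal.ofReal (Ch * h r * (r ^ αh * ((1 - r ^ (1-αh)) / (1 - αh)))) := by
    have e1 : ∫⁻ z, ENNReal.ofReal (max (‖z‖ - r) 0) ∂μ'
        = ∫⁻ z in A, ENNReal.ofReal ((‖z‖ - r) * ν ‖z‖) := by
      rw [hμ', lintegral_withDensity_eq_lintegral_mul _ hN_meas
        (((measurable_norm.sub_const r).max measurable_const).ennreal_ofReal)]
      refine setLIntegral_congr_fun hA (fun z hz => ?_)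
      simp only [Pi.mul_apply]
      rw [ENNReal.ofReal_mul' (hν_nonneg _),
        max_eq_left (by linarith [hz.1] : (0:ℝ) ≤ ‖z‖ - r), mul_comm]
    have lc : ∫⁻ z, ENNReal.ofReal (max (‖z‖ - r) 0) ∂μ'
        = ∫⁻ t in Ioi (0:ℝ), μ' {z | t < max (‖z‖ - r) 0} :=
      lintegral_eq_lintegral_meas_lt μ' (ae_of_all _ fun z => le_max_right _ _)
        (((measurable_norm.sub_const r).max measurable_const).aemeasurable)
    have hbound : ∀ t ∈ Ioi (0:ℝ), μ' {z | t < max (‖z‖ - r) 0}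
        ≤ indicator (Ioo 0 (1-r)) (fun t => ENNReal.ofReal (Ch * (r/(t+r)) ^ αh * h r)) t := by
      intro t ht
      rw [mem_Ioi] at ht
      have hset : {z : E | t < max (‖z‖ - r) 0} = {z : E | t + r < ‖z‖} := by
        ext z
        simp only [mem_setOf_eq, lt_max_iff]
        constructor
        · rintro (hx | hx)
          · linarith
          · linarith
        · intro hx; left; linarith
      have hsm : MeasurableSet {z : E | t + r < ‖z‖} :=
        measurableSet_lt measurable_const measurable_norm
      rw [hset, hμ'app _ hsm]
      by_cases hc : t < 1 - r
      · have hmem : t ∈ Ioo (0:ℝ) (1-r) := mem_Ioo.2 ⟨ht, hc⟩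
        rw [indicator_of_mem hmem]
        calc ∫⁻ z in {z : E | t + r < ‖z‖} ∩ A, N z
            ≤ ∫⁻ z in {z : E | t + r ≤ ‖z‖}, N z :=
              lintegral_mono_set fun z hz => le_of_lt (show t + r < ‖z‖ from hz.1)
          _ ≤ ENNReal.ofReal (h (t+r)) := key (t+r) (by linarith)
          _ ≤ _ := ENNReal.ofReal_le_ofReal (hscale (t+r) (by linarith) (by linarith))
      · have hempty : {z : E | t + r < ‖z‖} ∩ A = ∅ := by
          apply eq_empty_iff_forall_notMem.2
          intro z hz
          simp only [hAdef, mem_inter_iff, mem_setOf_eq] at hz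
          obtain ⟨hz1, hz2, hz3⟩ := hz
          push_neg at hc
          linarith
        rw [hempty]
        simp
    have hmeas_ind : Measurable (indicator (Ioo (0:ℝ) (1-r))
        (fun t => ENNReal.ofReal (Ch * (r/(t+r)) ^ αh * h r))) := by
      apply Measurable.indicator _ measurableSet_Ioo
      apply Measurable.ennreal_ofReal
      apply Measurable.mul _ measurable_const
      apply Measurable.mul measurable_const
      exact (measurable_const.div (measurable_id'.add_const r)).pow measurable_const
    have hg_cont : ContinuousOn (fun t : ℝ => Ch * (r/(t+r)) ^ αh * h r) (Icc 0 (1-r)) := by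
      apply ContinuousOn.mul _ continuousOn_const
      apply ContinuousOn.mul continuousOn_const
      apply ContinuousOn.rpow_const
      · exact continuousOn_const.div (continuous_id.add continuous_const).continuousOn
          (fun t ht => by have := ht.1; positivity)
      · intro t ht
        left
        have := ht.1
        positivity
    have hg_int : IntegrableOn (fun t : ℝ => Ch * (r/(t+r)) ^ αh * h r) (Ioo 0 (1-r)) :=
      (hg_cont.integrableOn_Icc).mono_set Ioo_subset_Icc_self
    calc ∫⁻ z in A, ENNReal.ofReal ((‖z‖ - r) * ν ‖z‖)
        = ∫⁻ t in Ioi (0:ℝ), μ' {z | t < max (‖z‖ - r) 0} := by rw [← e1, lc]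
      _ ≤ ∫⁻ t in Ioi (0:ℝ), indicator (Ioo 0 (1-r))
            (fun t => ENNReal.ofReal (Ch * (r/(t+r)) ^ αh * h r)) t :=
          setLIntegral_mono hmeas_ind hbound
      _ = ∫⁻ t in Ioo (0:ℝ) (1-r), ENNReal.ofReal (Ch * (r/(t+r)) ^ αh * h r) := by
          rw [lintegral_indicator measurableSet_Ioo, Measure.restrict_restrict measurableSet_Ioo,
            inter_eq_self_of_subset_left (fun x hx => hx.1)]
      _ = ENNReal.ofReal (∫ t in Ioo (0:ℝ) (1-r), Ch * (r/(t+r)) ^ αh * h r) := by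
          rw [← ofReal_integral_eq_lintegral_ofReal hg_int]
          filter_upwards [ae_restrict_mem measurableSet_Ioo] with t ht
          have htr : (0:ℝ) < t + r := by have := ht.1; linarith
          have h0 : (0:ℝ) ≤ (r/(t+r)) ^ αh := Real.rpow_nonneg (by positivity) _
          simp only [Pi.zero_apply]
          exact mul_nonneg (mul_nonneg (by linarith) h0) hH
      _ ≤ ENNReal.ofReal (Ch * h r * (r ^ αh * ((1 - r ^ (1-αh)) / (1 - αh)))) := by
          apply ENNReal.ofReal_le_ofReal
          rw [← integral_Ioc_eq_integral_Ioo,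
            ← intervalIntegral.integral_of_le (by linarith : (0:ℝ) ≤ 1-r)]
          have hcongr : ∫ t in (0:ℝ)..(1-r), Ch * (r/(t+r)) ^ αh * h r
              = (Ch * h r) * ∫ t in (0:ℝ)..(1-r), (r/(t+r)) ^ αh := by
            rw [← intervalIntegral.integral_const_mul]
            apply intervalIntegral.integral_congr
            intro t ht
            ring
          rw [hcongr]
          have heq2 : ∫ t in (0:ℝ)..(1-r), (r/(t+r)) ^ αh
              = r ^ αh * ∫ t in (0:ℝ)..(1-r), (t+r) ^ (-αh) := by
            rw [← intervalIntegral.integral_const_mul]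
            apply intervalIntegral.integral_congr
            intro t ht
            rw [uIcc_of_le (by linarith : (0:ℝ) ≤ 1-r)] at ht
            have htr : 0 < t + r := by have := ht.1; linarith
            show (r / (t + r)) ^ αh = r ^ αh * (t + r) ^ (-αh)
            rw [Real.div_rpow hr0.le htr.le, Real.rpow_neg htr.le, div_eq_mul_inv]
          rw [heq2]
          have heq3 : ∫ t in (0:ℝ)..(1-r), (t+r) ^ (-αh) = ∫ s in r..(1:ℝ), s ^ (-αh) := by
            have := intervalIntegral.integral_comp_add_right (a := 0) (b := 1-r)
              (fun s : ℝ => s ^ (-αh)) r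
            simpa using this
          rw [heq3, integral_rpow (Or.inl (by linarith : (-1:ℝ) < -αh)), Real.one_rpow,
            (by ring : -αh + 1 = 1 - αh)]
  -- combine
  calc ∫⁻ z in A, ENNReal.ofReal (‖z‖ * ν ‖z‖)
      = (∫⁻ z in A, ENNReal.ofReal ((‖z‖ - r) * ν ‖z‖))
        + ∫⁻ z in A, ENNReal.ofReal (r * ν ‖z‖) := split
    _ ≤ ENNReal.ofReal (Ch * h r * (r ^ αh * ((1 - r ^ (1-αh)) / (1 - αh))))
        + ENNReal.ofReal (r * h r) := add_le_add term1 term2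
    _ = ENNReal.ofReal (Ch * h r * (r ^ αh * ((1 - r ^ (1-αh)) / (1 - αh))) + r * h r) :=
        (ENNReal.ofReal_add hX0 (mul_nonneg hr0.le hH)).symm
    _ ≤ ENNReal.ofReal (2 * Ch / (1 - αh) * (r ^ αh * h r)) := by
        apply ENNReal.ofReal_le_ofReal
        have hrP : r ≤ r ^ αh := by
          nth_rewrite 1 [← Real.rpow_one r]
          exact Real.rpow_le_rpow_of_exponent_ge hr0 hr1 hα1.le
        have step1 : r * h r ≤ Ch * (r ^ αh * h r) / (1 - αh) := by
          have h1 : r * h r ≤ r ^ αh * h r := mul_le_mul_of_nonneg_right hrP hH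
          have h2 : r ^ αh * h r ≤ Ch * (r ^ αh * h r) :=
            le_mul_of_one_le_left (mul_nonneg hP0 hH) hCh
          have h3 : Ch * (r ^ αh * h r) ≤ Ch * (r ^ αh * h r) / (1 - αh) := by
            rw [le_div_iff₀ h1a]
            nlinarith [mul_nonneg (mul_nonneg (le_trans zero_le_one hCh) hP0) hH]
          linarith
        have step2 : Ch * h r * (r ^ αh * ((1 - r ^ (1-αh)) / (1 - αh)))
            ≤ Ch * (r ^ αh * h r) / (1 - αh) := by
          rw [(by ring : Ch * h r * (r ^ αh * ((1 - r ^ (1-αh)) / (1 - αh)))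
            = (Ch * h r * (r ^ αh * (1 - r ^ (1-αh)))) / (1-αh)), div_le_div_iff₀ h1a h1a]
          have hX : 0 ≤ Ch * h r * r ^ αh := mul_nonneg (mul_nonneg (by linarith) hH) hP0
          nlinarith [mul_nonneg hX hQ0]
        have hsum : 2 * Ch / (1 - αh) * (r ^ αh * h r)
            = Ch * (r ^ αh * h r) / (1 - αh) + Ch * (r ^ αh * h r) / (1 - αh) := by ring
        linarith
end

section
/- Let $(B,\|\cdot\|)$ be a Banach space and let $Q^0_t:B\to B$, $t\in(0,1]$, be linear operators satisfying $\|Q^0_t f\|\le C_3 t^{-1} r_t^{\varepsilon_0}\|f\|$ for some constants $C_3,\varepsilon_0>0$ and a non-negative non-decreasing function $r$ with $r_{\lambda t}\le\sqrt{\lambda}\,r_t$. Define inductively $Q^n_t f = \int_0^t Q^0_{t-s} Q^{n-1}_s f\,ds$ (Bochner integral), with $Q^0$ the given family. Then for all $n\in\mathbb{N}$, $t\in(0,1]$ and $f\in B$, $\|Q^n_t f\|\le C_3^{n+1}\prod_{k=1}^n B\big(\tfrac{\varepsilon_0}{2},\tfrac{k\varepsilon_0}{2}\big)\, t^{-1}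 r_t^{(n+1)\varepsilon_0}\,\|f\|$, where $B(a,b)$ is the Beta function. -/
open MeasureTheory Set

lemma beta_conv {a b : ℝ} (ha : 0 < a) (hb : 0 < b) :
    IntervalIntegrable (fun u : ℝ => u ^ (a - 1) * (1 - u) ^ (b - 1)) volume 0 1 := by
  have hC := Complex.betaIntegral_convergent (u := a) (v := b) (by simpa) (by simpa)
  have hN := hC.norm
  rw [intervalIntegrable_iff_integrableOn_Ioo_of_le zero_le_one] at hN ⊢
  refine hN.congr_fun (fun x hx => ?_) measurableSet_Ioo
  obtain ⟨hx0, hx1⟩ := hx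
  dsimp only
  rw [norm_mul]
  have h1 : (1 - (x:ℂ)) = ((1 - x : ℝ) : ℂ) := by push_cast; ring
  rw [h1, Complex.norm_cpow_eq_rpow_re_of_pos hx0, Complex.norm_cpow_eq_rpow_re_of_pos (by linarith)]
  norm_num

lemma integrableOn_kernel {t a b : ℝ} (ht : 0 < t) (ha : 0 < a) (hb : 0 < b) :
    IntegrableOn (fun s : ℝ => (t - s) ^ (a - 1) * s ^ (b - 1)) (Ioo 0 t) volume := by
  have hf := beta_conv hb ha
  have h1 : IntervalIntegrable (fun s : ℝ => (s * t⁻¹) ^ (b - 1) * (1 - s * t⁻¹) ^ (a - 1))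
      volume 0 t := by
    have := hf.comp_mul_right (c := t⁻¹)
    simpa [div_inv_eq_mul, ht.ne'] using this
  have h2 := (h1.const_mul (t ^ (b - 1) * t ^ (a - 1)))
  rw [intervalIntegrable_iff_integrableOn_Ioo_of_le ht.le] at h2
  refine h2.congr_fun (fun s hs => ?_) measurableSet_Ioo
  obtain ⟨hs0, hst⟩ := hs
  have h1s : 1 - s * t⁻¹ = (t - s) / t := by field_simp
  have h2s : s * t⁻¹ = s / t := by ring
  dsimp only
  rw [h1s, h2s, Real.div_rpow hs0.le ht.le, Real.div_rpow (sub_nonneg.2 hst.le) ht.le]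
  have htb : t ^ (b - 1) ≠ 0 := (Real.rpow_pos_of_pos ht _).ne'
  have hta : t ^ (a - 1) ≠ 0 := (Real.rpow_pos_of_pos ht _).ne'
  field_simp

lemma integral_kernel {t a b : ℝ} (ht : 0 < t) :
    ∫ s in Ioo (0:ℝ) t, (t - s) ^ (a - 1) * s ^ (b - 1)
      = t ^ (a + b - 1) * Beta b a := by
  have h0 : ∫ s in Ioo (0:ℝ) t, (t - s) ^ (a - 1) * s ^ (b - 1)
      = ∫ s in (0:ℝ)..t, (t - s) ^ (a - 1) * s ^ (b - 1) := by
    rw [intervalIntegral.integral_of_le ht.le, integral_Ioc_eq_integral_Ioo]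
  rw [h0]
  have hsub := intervalIntegral.integral_comp_mul_left (a := 0) (b := 1) (c := t)
    (fun s : ℝ => (t - s) ^ (a - 1) * s ^ (b - 1)) ht.ne'
  simp only [mul_zero, mul_one] at hsub
  have : ∫ s in (0:ℝ)..t, (t - s) ^ (a - 1) * s ^ (b - 1)
      = t * ∫ x in (0:ℝ)..1, (t - t * x) ^ (a - 1) * (t * x) ^ (b - 1) := by
    rw [hsub, smul_eq_mul, ← mul_assoc, mul_inv_cancel₀ ht.ne', one_mul]
  rw [this]
  have hcong : ∫ x in (0:ℝ)..1, (t - t * x) ^ (a - 1) * (t * x) ^ (b - 1)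
      = t ^ (a - 1) * t ^ (b - 1) * Beta b a := by
    rw [Beta, ← intervalIntegral.integral_const_mul]
    apply intervalIntegral.integral_congr
    intro x hx
    dsimp only
    rw [uIcc_of_le zero_le_one] at hx
    have hx0 : 0 ≤ x := hx.1
    have hx1 : 0 ≤ 1 - x := by linarith [hx.2]
    have e1 : t - t * x = t * (1 - x) := by ring
    rw [e1, Real.mul_rpow ht.le hx1, Real.mul_rpow ht.le hx0]
    ring
  rw [hcong]
  rw [Real.rpow_sub ht, Real.rpow_sub ht, Real.rpow_sub ht, Real.rpow_add ht, Real.rpow_one]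
  field_simp

/-- with `Q⁰_t` bounded operators on a Banach space `B` satisfying
`‖Q⁰_t f‖ ≤ C₃ t⁻¹ r_t^{ε₀} ‖f‖`, and `Qⁿ_t f = ∫₀ᵗ Q⁰_{t-s} Q^{n-1}_s f ds`, one has
`‖Qⁿ_t f‖ ≤ C₃^{n+1} ∏_{k=1}^n B(ε₀/2, kε₀/2) · t⁻¹ r_t^{(n+1)ε₀} ‖f‖`. -/
theorem stmt3 {B : Type*} [NormedAddCommGroup B] [NormedSpace ℝ B] [CompleteSpace B]
    (r : ℝ → ℝ)
    (hr_nonneg : ∀ t ∈ Ioc (0:ℝ) 1, 0 ≤ r t)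
    (hr_mono : ∀ s ∈ Ioc (0:ℝ) 1, ∀ t ∈ Ioc (0:ℝ) 1, s ≤ t → r s ≤ r t)
    (hr_scale : ∀ l ∈ Ioc (0:ℝ) 1, ∀ t ∈ Ioc (0:ℝ) 1, r (l * t) ≤ Real.sqrt l * r t)
    (C3 ε0 : ℝ) (hC3 : 0 < C3) (hε0 : 0 < ε0)
    (Q0 : ℝ → B →ₗ[ℝ] B)
    (hQ0 : ∀ t ∈ Ioc (0:ℝ) 1, ∀ f : B, ‖Q0 t f‖ ≤ C3 * (t⁻¹ * r t ^ ε0) * ‖f‖)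
    (hQ0cont : ∀ f : B, ContinuousOn (fun t => Q0 t f) (Ioc (0:ℝ) 1))
    (Q : ℕ → ℝ → B → B)
    (hQzero : ∀ t f, Q 0 t f = Q0 t f)
    (hQsucc : ∀ n : ℕ, ∀ t : ℝ, ∀ f : B,
      Q (n + 1) t f = ∫ s in Ioo (0:ℝ) t, Q0 (t - s) (Q n s f))
    (n : ℕ) (t : ℝ) (ht : t ∈ Ioc (0:ℝ) 1) (f : B) :
    ‖Q n t f‖ ≤ C3 ^ (n + 1) * (∏ k ∈ Finset.Icc 1 n, Beta (ε0 / 2) ((k : ℝ) * ε0 / 2))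
      * (t⁻¹ * r t ^ (((n : ℝ) + 1) * ε0)) * ‖f‖ := by
  induction n generalizing t with
  | zero =>
    have hIcc : Finset.Icc 1 0 = (∅ : Finset ℕ) := rfl
    rw [hQzero, hIcc, Finset.prod_empty, mul_one]
    simpa using hQ0 t ht f
  | succ n ih =>
    obtain ⟨ht0, ht1⟩ := ht
    set a := ε0 / 2 with ha_def
    set b := ((n:ℝ) + 1) * ε0 / 2 with hb_def
    have ha : 0 < a := by rw [ha_def]; positivity
    have hb : 0 < b := by
      rw [hb_def]
      have : (0:ℝ) < (n:ℝ) + 1 := by positivity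
      positivity
    set M := C3 ^ (n + 1) * (∏ k ∈ Finset.Icc 1 n, Beta (ε0 / 2) ((k : ℝ) * ε0 / 2)) with hM_def
    have hM : 0 ≤ M := by
      rw [hM_def]
      exact mul_nonneg (pow_nonneg hC3.le _) (Finset.prod_nonneg fun k _ => Beta_nonneg)
    have hrt : 0 ≤ r t := hr_nonneg t ⟨ht0, ht1⟩
    set K := C3 * M * ‖f‖ * r t ^ (((n:ℝ) + 2) * ε0) * t ^ (-(a + b)) with hK_def
    -- pointwise bound
    have hpt : ∀ s ∈ Ioo (0:ℝ) t,
        ‖Q0 (t - s) (Q n s f)‖ ≤ K * ((t - s) ^ (a - 1) * s ^ (b - 1)) := by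
      intro s hs
      obtain ⟨hs0, hst⟩ := hs
      have hts0 : 0 < t - s := by linarith
      have hsI : s ∈ Ioc (0:ℝ) 1 := ⟨hs0, by linarith⟩
      have htsI : t - s ∈ Ioc (0:ℝ) 1 := ⟨hts0, by linarith⟩
      have hscale : ∀ u : ℝ, 0 < u → u ≤ t → ∀ p : ℝ, 0 ≤ p →
          r u ^ p ≤ (u / t) ^ (p / 2) * r t ^ p := by
        intro u hu hut p hp
        have hl : u / t ∈ Ioc (0:ℝ) 1 := ⟨by positivity, (div_le_one ht0).2 hut⟩
        have h := hr_scale (u / t) hl t ⟨ht0, ht1⟩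
        rw [div_mul_cancel₀ _ ht0.ne'] at h
        calc r u ^ p ≤ (Real.sqrt (u / t) * r t) ^ p :=
              Real.rpow_le_rpow (hr_nonneg u ⟨hu, by linarith⟩) h hp
          _ = (u / t) ^ (p / 2) * r t ^ p := by
              rw [Real.mul_rpow (Real.sqrt_nonneg _) hrt, Real.sqrt_eq_rpow,
                ← Real.rpow_mul (by positivity)]
              ring_nf
      have h4 : r (t - s) ^ ε0 ≤ ((t - s) / t) ^ a * r t ^ ε0 := by
        have := hscale (t - s) hts0 (by linarith) ε0 hε0.le
        rwa [← ha_def] at this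
      have h5 : r s ^ (((n:ℝ) + 1) * ε0) ≤ (s / t) ^ b * r t ^ (((n:ℝ) + 1) * ε0) := by
        have hp : (0:ℝ) ≤ ((n:ℝ) + 1) * ε0 := by positivity
        have := hscale s hs0 hst.le (((n:ℝ) + 1) * ε0) hp
        rwa [← hb_def] at this
      have hY : ‖Q n s f‖ ≤ M * (s⁻¹ * ((s / t) ^ b * r t ^ (((n:ℝ) + 1) * ε0))) * ‖f‖ :=
        le_trans (ih s hsI)
          (mul_le_mul_of_nonneg_right
            (mul_le_mul_of_nonneg_left (mul_le_mul_of_nonneg_left h5 (inv_nonneg.2 hs0.le)) hM)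
            (norm_nonneg f))
      have hBnn : 0 ≤ C3 * ((t - s)⁻¹ * (((t - s) / t) ^ a * r t ^ ε0)) :=
        mul_nonneg hC3.le (mul_nonneg (inv_nonneg.2 hts0.le)
          (mul_nonneg (Real.rpow_nonneg (by positivity) _) (Real.rpow_nonneg hrt _)))
      calc ‖Q0 (t - s) (Q n s f)‖
          ≤ C3 * ((t - s)⁻¹ * r (t - s) ^ ε0) * ‖Q n s f‖ := hQ0 _ htsI _
        _ ≤ C3 * ((t - s)⁻¹ * (((t - s) / t) ^ a * r t ^ ε0))
              * (M * (s⁻¹ * ((s / t) ^ b * r t ^ (((n:ℝ) + 1) * ε0))) * ‖f‖) :=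
            mul_le_mul
              (mul_le_mul_of_nonneg_left (mul_le_mul_of_nonneg_left h4 (inv_nonneg.2 hts0.le))
                hC3.le)
              hY (norm_nonneg _) hBnn
        _ = K * ((t - s) ^ (a - 1) * s ^ (b - 1)) := by
            rw [hK_def]
            have e0 : ((n:ℝ) + 2) * ε0 = ε0 + ((n:ℝ) + 1) * ε0 := by ring
            have e0' : ε0 + ((n:ℝ) + 1) * ε0 ≠ 0 := by positivity
            rw [e0, Real.rpow_add' hrt e0']
            rw [Real.div_rpow hts0.le ht0.le, Real.div_rpow hs0.le ht0.le,
              Real.rpow_sub hts0, Real.rpow_sub hs0, Real.rpow_one,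
              Real.rpow_neg ht0.le, Real.rpow_add ht0]
            have h1 : t ^ a ≠ 0 := (Real.rpow_pos_of_pos ht0 _).ne'
            have h2 : t ^ b ≠ 0 := (Real.rpow_pos_of_pos ht0 _).ne'
            field_simp
            rw [Real.rpow_one]
            ring
    calc ‖Q (n + 1) t f‖
        = ‖∫ s in Ioo (0:ℝ) t, Q0 (t - s) (Q n s f)‖ := by rw [hQsucc]
      _ ≤ ∫ s in Ioo (0:ℝ) t, ‖Q0 (t - s) (Q n s f)‖ := norm_integral_le_integral_norm _
      _ ≤ ∫ s in Ioo (0:ℝ) t, K * ((t - s) ^ (a - 1) * s ^ (b - 1)) := by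
          apply integral_mono_of_nonneg
          · exact ae_of_all _ fun s => norm_nonneg _
          · exact (integrableOn_kernel ht0 ha hb).const_mul K
          · filter_upwards [ae_restrict_mem measurableSet_Ioo] with s hs using hpt s hs
      _ = K * (t ^ (a + b - 1) * Beta b a) := by
          rw [MeasureTheory.integral_const_mul, integral_kernel ht0]
      _ = C3 ^ (n + 1 + 1) * (∏ k ∈ Finset.Icc 1 (n + 1), Beta (ε0 / 2) ((k : ℝ) * ε0 / 2))
          * (t⁻¹ * r t ^ ((↑(n + 1) + 1) * ε0)) * ‖f‖ := by
          rw [Finset.prod_Icc_succ_top (Nat.le_add_left 1 n), hK_def, hM_def, Beta_symm b a]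
          push_cast
          have e2 : ((n:ℝ) + 1 + 1) * ε0 = ((n:ℝ) + 2) * ε0 := by ring
          rw [e2, ← ha_def, ← hb_def]
          have e3 : t ^ (-(a + b)) * t ^ (a + b - 1) = t⁻¹ := by
            rw [← Real.rpow_add ht0]
            have : -(a + b) + (a + b - 1) = -1 := by ring
            rw [this, Real.rpow_neg_one]
          calc C3 * M * ‖f‖ * r t ^ (((n:ℝ) + 2) * ε0) * t ^ (-(a + b))
              * (t ^ (a + b - 1) * Beta a b)
              = C3 * M * ‖f‖ * r t ^ (((n:ℝ) + 2) * ε0)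
                * (t ^ (-(a + b)) * t ^ (a + b - 1)) * Beta a b := by ring
            _ = _ := by rw [e3, hM_def]; ring
end

section
/- Let $\varphi(r)=\frac{1}{\log(2+1/r)}$ for $r>0$ and $\nu(r)=r^{-d-1}\varphi(r)$ in dimension $d\ge 1$. Then the associated function $h(r)=\int_{\mathbb{R}^d}(1\wedge|x|^2/r^2)\nu(|x|)dx$ satisfies: for every $\alpha\in(0,1)$ there is $C\ge 1$ with $h(r)\le C\lambda^{\alpha}h(\lambda r)$ for all $\lambda,r\in(0,1]$, but there is no constant $C$ for which this holds with $\alpha=1$. -/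
open MeasureTheory Set

/-- `φ(r) = 1 / log(2 + 1/r)`. -/
noncomputable def phi14 (r : ℝ) : ℝ := 1 / Real.log (2 + 1 / r)

lemma L_pos {r : ℝ} (hr : 0 < r) : 0 < Real.log (2 + 1 / r) :=
  Real.log_pos (by nlinarith [one_div_pos.mpr hr])

lemma phi14_pos {r : ℝ} (hr : 0 < r) : 0 < phi14 r := one_div_pos.mpr (L_pos hr)

lemma log2_le_L {r : ℝ} (hr : 0 < r) : Real.log 2 ≤ Real.log (2 + 1 / r) :=
  Real.log_le_log (by norm_num) (by nlinarith [one_div_pos.mpr hr])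

lemma phi14_mono {a b : ℝ} (ha : 0 < a) (hab : a ≤ b) : phi14 a ≤ phi14 b := by
  have hb : 0 < b := ha.trans_le hab
  apply one_div_le_one_div_of_le (L_pos hb)
  apply Real.log_le_log (by positivity)
  have : 1 / b ≤ 1 / a := one_div_le_one_div_of_le ha hab
  linarith

lemma L_le {r y : ℝ} (hr : 0 < r) (hy : r ≤ y) :
    Real.log (2 + 1 / r) ≤ Real.log (2 + 1 / y) + Real.log (y / r) := by
  have hy0 : 0 < y := hr.trans_le hy
  rw [← Real.log_mul (by positivity) (by positivity)]
  apply Real.log_le_log (by positivity)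
  have h1 : (2 + 1 / y) * (y / r) = 2 * y / r + 1 / r := by field_simp
  have h2 : (2:ℝ) ≤ 2 * y / r := by
    rw [le_div_iff₀ hr]; nlinarith
  rw [h1]; linarith

lemma phi14_upper {r y : ℝ} (hr : 0 < r) (hy : r ≤ y) :
    phi14 y ≤ phi14 r + phi14 r / Real.log 2 * (Real.log y - Real.log r) := by
  have hy0 : 0 < y := hr.trans_le hy
  set a := Real.log (2 + 1 / r) with ha
  set b := Real.log (2 + 1 / y) with hb
  have ha0 : 0 < a := L_pos hr
  have hb0 : 0 < b := L_pos hy0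
  have h2 : (0:ℝ) < Real.log 2 := Real.log_pos (by norm_num)
  have hL2 : Real.log 2 ≤ b := log2_le_L hy0
  have ht : 0 ≤ Real.log y - Real.log r := by
    have := Real.log_le_log hr hy; linarith
  have key : a ≤ b + (Real.log y - Real.log r) := by
    have := L_le hr hy
    rwa [Real.log_div hy0.ne' hr.ne'] at this
  set t := Real.log y - Real.log r
  show 1 / b ≤ 1 / a + 1 / a / Real.log 2 * t
  have hrhs : 1 / a + 1 / a / Real.log 2 * t = (Real.log 2 + t) / (a * Real.log 2) := by
    field_simp
  rw [hrhs, div_le_div_iff₀ hb0 (by positivity)]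
  nlinarith [mul_nonneg ht (sub_nonneg.mpr hL2)]
open Filter

lemma phi14m : Measurable (fun r : ℝ => 1 / Real.log (2 + 1 / r)) := by
  exact measurable_const.div (Real.measurable_log.comp (measurable_const.add (measurable_const.div measurable_id)))

lemma int_pow2 {r : ℝ} (hr : 0 < r) : IntegrableOn (fun y : ℝ => (y ^ 2)⁻¹) (Ioi r) := by
  have h := integrableOn_Ioi_rpow_of_lt (show (-2:ℝ) < -1 by norm_num) hr
  apply h.congr_fun ?_ measurableSet_Ioi
  intro y hy
  have hy0 : 0 < y := hr.trans hy
  show y ^ (-2:ℝ) = (y ^ 2)⁻¹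
  rw [show (-2:ℝ) = ((-2:ℤ):ℝ) by norm_num, Real.rpow_intCast, zpow_neg]
  norm_num [zpow_two, sq]

lemma int_pow2_val {r : ℝ} (hr : 0 < r) : ∫ y in Ioi r, (y ^ 2)⁻¹ = r⁻¹ := by
  rw [setIntegral_congr_fun measurableSet_Ioi (g := fun y : ℝ => y ^ (-2:ℝ)) ?_]
  · rw [integral_Ioi_rpow_of_lt (by norm_num) hr]
    norm_num [Real.rpow_neg_one]
  · intro y hy
    have hy0 : 0 < y := hr.trans hy
    show (y ^ 2)⁻¹ = y ^ (-2:ℝ)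
    rw [show (-2:ℝ) = ((-2:ℤ):ℝ) by norm_num, Real.rpow_intCast, zpow_neg]
    norm_num [zpow_two, sq]

lemma int_log_integrable {r : ℝ} (hr : 0 < r) :
    IntegrableOn (fun y : ℝ => (Real.log y - Real.log r) / y ^ 2) (Ioi r) := by
  have hg : IntegrableOn (fun y : ℝ => 2 * r ^ (-(1:ℝ)/2) * y ^ (-(3:ℝ)/2)) (Ioi r) :=
    (integrableOn_Ioi_rpow_of_lt (show (-(3:ℝ)/2) < -1 by norm_num) hr).const_mul _
  apply Integrable.mono hg
  · exact ((Real.measurable_log.sub measurable_const).div (measurable_id.pow_const 2)).aestronglyMeasurable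
  · filter_upwards [ae_restrict_mem measurableSet_Ioi] with y hy
    have hy0 : 0 < y := hr.trans hy
    have hyr : 0 < y / r := by positivity
    have h1 : 0 ≤ Real.log y - Real.log r := by
      have := Real.log_le_log hr (le_of_lt hy); linarith
    have hlog : Real.log y - Real.log r ≤ 2 * (y / r) ^ ((1:ℝ)/2) := by
      have e : Real.log (y / r) = Real.log y - Real.log r := Real.log_div hy0.ne' hr.ne'
      have h2 : Real.log (Real.sqrt (y / r)) ≤ Real.sqrt (y / r) - 1 :=
        Real.log_le_sub_one_of_pos (Real.sqrt_pos.mpr hyr)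
      have h3 : Real.log (Real.sqrt (y / r)) = Real.log (y / r) / 2 := Real.log_sqrt hyr.le
      have h5 : Real.log (y / r) ≤ 2 * Real.sqrt (y / r) := by
        have hs : 0 ≤ Real.sqrt (y / r) := Real.sqrt_nonneg _
        nlinarith [h2, h3]
      rw [Real.sqrt_eq_rpow] at h5
      rw [← e]
      linarith
    rw [Real.norm_eq_abs, Real.norm_eq_abs, abs_of_nonneg (by positivity), abs_of_nonneg ?_]
    · have e1 : (y / r) ^ ((1:ℝ)/2) = y ^ ((1:ℝ)/2) * r ^ (-(1:ℝ)/2) := by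
        rw [Real.div_rpow hy0.le hr.le, div_eq_mul_inv, ← Real.rpow_neg hr.le]
        norm_num
      have e2 : (y:ℝ) ^ (2:ℕ) = y ^ (2:ℝ) := by
        rw [← Real.rpow_natCast y 2]; norm_num
      have e3 : y ^ ((1:ℝ)/2) / y ^ (2:ℕ) = y ^ (-(3:ℝ)/2) := by
        rw [e2, ← Real.rpow_sub hy0]; norm_num
      calc (Real.log y - Real.log r) / y ^ 2
          ≤ 2 * (y / r) ^ ((1:ℝ)/2) / y ^ 2 := by
            apply div_le_div_of_nonneg_right ?_ (by positivity)
            · exact hlog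
      _ = 2 * r ^ (-(1:ℝ)/2) * (y ^ ((1:ℝ)/2) / y ^ (2:ℕ)) := by rw [e1]; ring
      _ = 2 * r ^ (-(1:ℝ)/2) * y ^ (-(3:ℝ)/2) := by rw [e3]
    · positivity

lemma int_log_val {r : ℝ} (hr : 0 < r) :
    ∫ y in Ioi r, (Real.log y - Real.log r) / y ^ 2 = r⁻¹ := by
  have hF : ∀ x ∈ Ici r, HasDerivAt (fun y : ℝ => -((Real.log y - Real.log r + 1) / y))
      ((Real.log x - Real.log r) / x ^ 2) x := by
    intro x hx
    have hx0 : 0 < x := lt_of_lt_of_le hr hx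
    have h1 : HasDerivAt (fun y : ℝ => Real.log y - Real.log r + 1) (1 / x) x := by
      simpa using ((Real.hasDerivAt_log hx0.ne').sub_const (Real.log r)).add_const 1
    have h2 := (h1.div (hasDerivAt_id x) hx0.ne')
    have : HasDerivAt (fun y : ℝ => -((Real.log y - Real.log r + 1) / y))
        (-((1 / x * x - (Real.log x - Real.log r + 1) * 1) / x ^ 2)) x := h2.neg
    convert this using 1
    field_simp
    ring
  have htend : Tendsto (fun y : ℝ => -((Real.log y - Real.log r + 1) / y)) atTop (nhds 0) := by
    have t1 : Tendsto (fun y : ℝ => Real.log y / y) atTop (nhds 0) :=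
      Real.isLittleO_log_id_atTop.tendsto_div_nhds_zero
    have t2 : Tendsto (fun y : ℝ => (1 - Real.log r) * y⁻¹) atTop (nhds 0) := by
      simpa using tendsto_inv_atTop_zero.const_mul (1 - Real.log r)
    have := (t1.add t2).neg
    simp only [add_zero, neg_zero] at this
    apply this.congr
    intro y
    rw [add_div, div_eq_mul_inv, div_eq_mul_inv, div_eq_mul_inv]
    ring
  have := integral_Ioi_of_hasDerivAt_of_tendsto' hF (int_log_integrable hr) htend
  rw [this, sub_self, zero_add]
  rw [zero_sub, neg_neg, one_div]
noncomputable def G14 (r : ℝ) : ℝ :=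
  ∫ y in Ioi (0:ℝ), min 1 (y ^ 2 / r ^ 2) * (phi14 y / y ^ 2)

lemma phi14_meas : Measurable phi14 := phi14m

lemma phi14_le {y : ℝ} (hy : 0 < y) : phi14 y ≤ 1 / Real.log 2 :=
  one_div_le_one_div_of_le (Real.log_pos (by norm_num)) (log2_le_L hy)

lemma intOn_phi_Ioc {r : ℝ} (hr : 0 < r) :
    IntegrableOn (fun y : ℝ => phi14 y / r ^ 2) (Ioc 0 r) := by
  have h2 : (0:ℝ) < Real.log 2 := Real.log_pos (by norm_num)
  have hb : IntegrableOn (fun _ : ℝ => (1 / Real.log 2) / r ^ 2) (Ioc 0 r) :=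
    integrableOn_const (by rw [Real.volume_Ioc]; exact ENNReal.ofReal_ne_top)
  apply Integrable.mono hb ((phi14_meas.div_const _).aestronglyMeasurable)
  filter_upwards [ae_restrict_mem measurableSet_Ioc] with y hy
  rw [Real.norm_eq_abs, Real.norm_eq_abs,
    abs_of_nonneg (div_nonneg (phi14_pos hy.1).le (sq_nonneg r)),
    abs_of_nonneg (le_of_lt (div_pos (div_pos one_pos h2) (by positivity)))]
  exact div_le_div_of_nonneg_right (phi14_le hy.1) (by positivity)

lemma intOn_phi_Ioi {r : ℝ} (hr : 0 < r) :
    IntegrableOn (fun y : ℝ => phi14 y / y ^ 2) (Ioi r) := by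
  have h2 : (0:ℝ) < Real.log 2 := Real.log_pos (by norm_num)
  have hb := (int_pow2 hr).const_mul (1 / Real.log 2)
  apply Integrable.mono hb ((phi14_meas.div (measurable_id.pow_const 2)).aestronglyMeasurable)
  filter_upwards [ae_restrict_mem measurableSet_Ioi] with y hy
  simp only [id_eq, Pi.div_apply]
  have hy0 : 0 < y := hr.trans hy
  rw [Real.norm_eq_abs, Real.norm_eq_abs,
    abs_of_nonneg (div_nonneg (phi14_pos hy0).le (sq_nonneg y)),
    abs_of_nonneg (le_of_lt (mul_pos (div_pos one_pos h2) (by positivity)))]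
  rw [div_eq_mul_inv (phi14 y)]
  exact mul_le_mul_of_nonneg_right (phi14_le hy0) (by positivity)

lemma G14_split {r : ℝ} (hr : 0 < r) :
    G14 r = (∫ y in Ioc 0 r, phi14 y / r ^ 2) + ∫ y in Ioi r, phi14 y / y ^ 2 := by
  have e1 : EqOn (fun y : ℝ => phi14 y / r ^ 2)
      (fun y : ℝ => min 1 (y ^ 2 / r ^ 2) * (phi14 y / y ^ 2)) (Ioc 0 r) := by
    intro y hy
    have hy0 : 0 < y := hy.1
    have hy0' : y ≠ 0 := hy0.ne'
    have hr' : r ≠ 0 := hr.ne'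
    have hmin : min 1 (y ^ 2 / r ^ 2) = y ^ 2 / r ^ 2 :=
      min_eq_right ((div_le_one (by positivity)).mpr (by nlinarith [hy.2]))
    simp only [hmin]
    field_simp
  have e2 : EqOn (fun y : ℝ => phi14 y / y ^ 2)
      (fun y : ℝ => min 1 (y ^ 2 / r ^ 2) * (phi14 y / y ^ 2)) (Ioi r) := by
    intro y hy
    have hy0 : 0 < y := hr.trans hy
    have hmin : min 1 (y ^ 2 / r ^ 2) = 1 :=
      min_eq_left ((one_le_div (by positivity)).mpr (by nlinarith [hy.out]))
    simp only [hmin, one_mul]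
  have h1 : IntegrableOn (fun y : ℝ => min 1 (y ^ 2 / r ^ 2) * (phi14 y / y ^ 2)) (Ioc 0 r) :=
    (intOn_phi_Ioc hr).congr_fun e1 measurableSet_Ioc
  have h2 : IntegrableOn (fun y : ℝ => min 1 (y ^ 2 / r ^ 2) * (phi14 y / y ^ 2)) (Ioi r) :=
    (intOn_phi_Ioi hr).congr_fun e2 measurableSet_Ioi
  rw [G14, ← Ioc_union_Ioi_eq_Ioi hr.le,
    setIntegral_union (Ioc_disjoint_Ioi le_rfl) measurableSet_Ioi h1 h2]
  congr 1
  · exact (setIntegral_congr_fun measurableSet_Ioc e1).symm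
  · exact (setIntegral_congr_fun measurableSet_Ioi e2).symm

lemma G14_lower {r : ℝ} (hr : 0 < r) : phi14 r / r ≤ G14 r := by
  have hA : (0:ℝ) ≤ ∫ y in Ioc 0 r, phi14 y / r ^ 2 :=
    setIntegral_nonneg measurableSet_Ioc fun y hy => div_nonneg (phi14_pos hy.1).le (sq_nonneg r)
  have hB : phi14 r / r ≤ ∫ y in Ioi r, phi14 y / y ^ 2 := by
    have hle : ∀ y ∈ Ioi r, phi14 r * (y ^ 2)⁻¹ ≤ phi14 y / y ^ 2 := by
      intro y hy
      rw [div_eq_mul_inv (phi14 y)]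
      exact mul_le_mul_of_nonneg_right (phi14_mono hr (le_of_lt hy)) (by positivity)
    have h := setIntegral_mono_on ((int_pow2 hr).const_mul _) (intOn_phi_Ioi hr)
      measurableSet_Ioi hle
    rwa [integral_const_mul, int_pow2_val hr, ← div_eq_mul_inv] at h
  rw [G14_split hr]; linarith

lemma G14_upper {r : ℝ} (hr : 0 < r) :
    G14 r ≤ (2 + 1 / Real.log 2) * (phi14 r / r) := by
  have h2 : (0:ℝ) < Real.log 2 := Real.log_pos (by norm_num)
  have hA : (∫ y in Ioc 0 r, phi14 y / r ^ 2) ≤ phi14 r / r := by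
    have hle : ∀ y ∈ Ioc 0 r, phi14 y / r ^ 2 ≤ phi14 r / r ^ 2 := fun y hy =>
      div_le_div_of_nonneg_right (phi14_mono hy.1 hy.2) (by positivity)
    have h := setIntegral_mono_on (intOn_phi_Ioc hr)
      (integrableOn_const (by rw [Real.volume_Ioc]; exact ENNReal.ofReal_ne_top))
      measurableSet_Ioc hle
    rw [setIntegral_const, Real.volume_real_Ioc_of_le hr.le, sub_zero,
      smul_eq_mul] at h
    calc (∫ y in Ioc 0 r, phi14 y / r ^ 2) ≤ r * (phi14 r / r ^ 2) := h
      _ = phi14 r / r := by field_simp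
  have hB : (∫ y in Ioi r, phi14 y / y ^ 2)
      ≤ phi14 r * r⁻¹ + (phi14 r / Real.log 2) * r⁻¹ := by
    have hi1 := (int_pow2 hr).const_mul (phi14 r)
    have hi2 := (int_log_integrable hr).const_mul (phi14 r / Real.log 2)
    have hle : ∀ y ∈ Ioi r, phi14 y / y ^ 2 ≤
        phi14 r * (y ^ 2)⁻¹ + (phi14 r / Real.log 2) * ((Real.log y - Real.log r) / y ^ 2) := by
      intro y hy
      have hy0 : 0 < y := hr.trans hy
      have h := phi14_upper hr (le_of_lt hy)
      calc phi14 y / y ^ 2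
          ≤ (phi14 r + phi14 r / Real.log 2 * (Real.log y - Real.log r)) / y ^ 2 :=
            div_le_div_of_nonneg_right h (by positivity)
        _ = phi14 r * (y ^ 2)⁻¹ + (phi14 r / Real.log 2) * ((Real.log y - Real.log r) / y ^ 2) := by
            ring
    have h := setIntegral_mono_on (intOn_phi_Ioi hr) (hi1.add hi2) measurableSet_Ioi hle
    simp only [Pi.add_apply] at h
    rwa [integral_add hi1 hi2, integral_const_mul, integral_const_mul, int_pow2_val hr,
      int_log_val hr] at h
  have e1 : phi14 r * r⁻¹ = phi14 r / r := (div_eq_mul_inv _ _).symm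
  have e2 : (2 + 1 / Real.log 2) * (phi14 r / r)
      = phi14 r / r + (phi14 r * r⁻¹ + (phi14 r / Real.log 2) * r⁻¹) := by
    field_simp; ring
  rw [G14_split hr, e2]
  linarith
/-- `h(r) = ∫ (1 ∧ |x|²/r²) ν(|x|) dx` with `ν(u) = u^{-d-1} φ(u)`. -/
noncomputable def h14 (d : ℕ) (r : ℝ) : ℝ :=
  ∫ x : EuclideanSpace ℝ (Fin d),
    min 1 (‖x‖ ^ 2 / r ^ 2) * (‖x‖ ^ (-(d : ℝ) - 1) * phi14 ‖x‖)

lemma h14_eq (d : ℕ) (hd : 1 ≤ d) (r : ℝ) :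
    h14 d r = ((d : ℝ) * (volume (Metric.ball (0 : EuclideanSpace ℝ (Fin d)) 1)).toReal) * G14 r := by
  haveI : Nontrivial (EuclideanSpace ℝ (Fin d)) :=
    Module.nontrivial_of_finrank_pos (R := ℝ)
      (by rw [finrank_euclideanSpace_fin]; exact_mod_cast hd)
  have key := integral_fun_norm_addHaar (volume : Measure (EuclideanSpace ℝ (Fin d)))
    (fun y : ℝ => min 1 (y ^ 2 / r ^ 2) * (y ^ (-(d : ℝ) - 1) * phi14 y))
  rw [finrank_euclideanSpace_fin] at key
  rw [h14, key, nsmul_eq_mul, smul_eq_mul, ← mul_assoc]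
  congr 1
  rw [G14]
  apply setIntegral_congr_fun measurableSet_Ioi
  intro y hy
  have hy0 : 0 < y := hy
  have e1 : (y : ℝ) ^ (d - 1) = y ^ ((d : ℝ) - 1) := by
    rw [← Real.rpow_natCast y (d - 1), Nat.cast_sub hd, Nat.cast_one]
  have e2 : y ^ ((d : ℝ) - 1) * y ^ (-(d : ℝ) - 1) = (y ^ 2)⁻¹ := by
    rw [← Real.rpow_add hy0]
    have : (d : ℝ) - 1 + (-(d : ℝ) - 1) = ((-2 : ℤ) : ℝ) := by push_cast; ring
    rw [this, Real.rpow_intCast, zpow_neg]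
    norm_num [zpow_two, sq]
  have : y ^ (d - 1) * (min 1 (y ^ 2 / r ^ 2) * (y ^ (-(d : ℝ) - 1) * phi14 y))
      = min 1 (y ^ 2 / r ^ 2) * (phi14 y / y ^ 2) := by
    rw [div_eq_mul_inv (phi14 y), e1, ← e2]; ring
  simpa [smul_eq_mul] using this
lemma one_le_L {r : ℝ} (hr0 : 0 < r) (hr1 : r ≤ 1) : 1 ≤ Real.log (2 + 1 / r) := by
  have h3 : (3:ℝ) ≤ 2 + 1 / r := by
    have : (1:ℝ) ≤ 1 / r := by rw [le_div_iff₀ hr0]; linarith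
    linarith
  have := Real.exp_one_lt_d9
  rw [Real.le_log_iff_exp_le (by positivity)]
  linarith

lemma scale_core {α : ℝ} (hα : α ∈ Ioo (0:ℝ) 1) {l r : ℝ}
    (hl0 : 0 < l) (hl1 : l ≤ 1) (hr0 : 0 < r) (hr1 : r ≤ 1) :
    (2 + 1 / Real.log 2) * (phi14 r / r)
      ≤ ((2 + 1 / Real.log 2) * (1 + 1 / (1 - α))) * l ^ α * (phi14 (l * r) / (l * r)) := by
  have h2 : (0:ℝ) < Real.log 2 := Real.log_pos (by norm_num)
  have hK : (0:ℝ) < 2 + 1 / Real.log 2 := by positivity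
  have h1α : (0:ℝ) < 1 - α := by linarith [hα.2]
  have hlr0 : 0 < l * r := mul_pos hl0 hr0
  set a := Real.log (2 + 1 / r) with ha
  set b := Real.log (2 + 1 / (l * r)) with hb
  have ha1 : 1 ≤ a := one_le_L hr0 hr1
  have ha0 : 0 < a := lt_of_lt_of_le one_pos ha1
  have hb0 : 0 < b := L_pos hlr0
  have hba : b ≤ a + Real.log (1 / l) := by
    have h := L_le hlr0 (by nlinarith : l * r ≤ r)
    have e : r / (l * r) = 1 / l := by field_simp
    rw [e] at h
    exact h
  have hloglam : l * Real.log (1 / l) ≤ l ^ α / (1 - α) := by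
    have hlog1 : Real.log (l ^ (α - 1)) = (α - 1) * Real.log l := Real.log_rpow hl0 _
    have hlog2 : Real.log (l ^ (α - 1)) ≤ l ^ (α - 1) - 1 :=
      Real.log_le_sub_one_of_pos (Real.rpow_pos_of_pos hl0 _)
    have hinv : Real.log (1 / l) = -Real.log l := by rw [one_div, Real.log_inv]
    have step : Real.log (1 / l) ≤ l ^ (α - 1) / (1 - α) := by
      rw [hinv, le_div_iff₀ h1α]
      nlinarith [hlog1, hlog2]
    have hmul : l * (l ^ (α - 1) / (1 - α)) = l ^ α / (1 - α) := by
      rw [mul_div_assoc']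
      congr 1
      nth_rewrite 1 [← Real.rpow_one l]
      rw [← Real.rpow_add hl0]
      norm_num
    calc l * Real.log (1 / l) ≤ l * (l ^ (α - 1) / (1 - α)) :=
          mul_le_mul_of_nonneg_left step hl0.le
      _ = l ^ α / (1 - α) := hmul
  have hlα : l ≤ l ^ α := by
    nth_rewrite 1 [← Real.rpow_one l]
    exact Real.rpow_le_rpow_of_exponent_ge hl0 hl1 hα.2.le
  have hlαpos : 0 < l ^ α := Real.rpow_pos_of_pos hl0 α
  have core : l * b ≤ (1 + 1 / (1 - α)) * l ^ α * a := by
    have s1 : l * b ≤ l * a + l * Real.log (1 / l) := by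
      nlinarith [mul_le_mul_of_nonneg_left hba hl0.le]
    have s2 : l * a ≤ l ^ α * a := mul_le_mul_of_nonneg_right hlα (by linarith)
    have s3 : l ^ α / (1 - α) ≤ l ^ α * a / (1 - α) := by
      apply div_le_div_of_nonneg_right ?_ h1α.le
      nlinarith
    have e : (1 + 1 / (1 - α)) * l ^ α * a = l ^ α * a + l ^ α * a / (1 - α) := by
      field_simp
    rw [e]
    linarith
  unfold phi14
  rw [← ha, ← hb, div_div, div_div, mul_one_div, mul_one_div,
    div_le_div_iff₀ (mul_pos ha0 hr0) (mul_pos hb0 hlr0)]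
  nlinarith [mul_le_mul_of_nonneg_right
    (mul_le_mul_of_nonneg_left core hK.le) hr0.le]
/-- for `ν(r) = r^{-d-1}/log(2+1/r)`, the function `h` satisfies the weak
scaling condition with any exponent `α ∈ (0,1)`, but not with exponent `1`. -/
theorem stmt14 (d : ℕ) (hd : 1 ≤ d) :
    (∀ α ∈ Ioo (0:ℝ) 1, ∃ C : ℝ, 1 ≤ C ∧ ∀ l ∈ Ioc (0:ℝ) 1, ∀ r ∈ Ioc (0:ℝ) 1,
        h14 d r ≤ C * l ^ α * h14 d (l * r)) ∧
    ¬ (∃ C : ℝ, 1 ≤ C ∧ ∀ l ∈ Ioc (0:ℝ) 1, ∀ r ∈ Ioc (0:ℝ) 1,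
        h14 d r ≤ C * l ^ (1:ℝ) * h14 d (l * r)) := by
  have h2 : (0:ℝ) < Real.log 2 := Real.log_pos (by norm_num)
  set K : ℝ := 2 + 1 / Real.log 2 with hKdef
  have hK : (0:ℝ) < K := by positivity
  set c : ℝ := (d : ℝ) * (volume (Metric.ball (0 : EuclideanSpace ℝ (Fin d)) 1)).toReal with hcdef
  have hc : 0 < c := by
    apply mul_pos (by exact_mod_cast hd : (0:ℝ) < (d:ℝ))
    apply ENNReal.toReal_pos
    · exact (Metric.measure_ball_pos volume _ one_pos).ne'
    · exact measure_ball_lt_top.ne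
  constructor
  · intro α hα
    have h1α : (0:ℝ) < 1 - α := by linarith [hα.2]
    set C0 : ℝ := K * (1 + 1 / (1 - α)) with hC0def
    have hC0 : 0 < C0 := by
      apply mul_pos hK
      have : 0 < 1 / (1 - α) := by positivity
      linarith
    refine ⟨max 1 C0, le_max_left _ _, ?_⟩
    intro l hl r hr
    obtain ⟨hl0, hl1⟩ := hl
    obtain ⟨hr0, hr1⟩ := hr
    have hlr0 : 0 < l * r := mul_pos hl0 hr0
    have hlα : (0:ℝ) < l ^ α := Real.rpow_pos_of_pos hl0 α
    have hGpos : 0 < G14 (l * r) :=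
      lt_of_lt_of_le (div_pos (phi14_pos hlr0) hlr0) (G14_lower hlr0)
    have H : G14 r ≤ max 1 C0 * l ^ α * G14 (l * r) := by
      calc G14 r ≤ K * (phi14 r / r) := G14_upper hr0
        _ ≤ C0 * l ^ α * (phi14 (l * r) / (l * r)) := scale_core hα hl0 hl1 hr0 hr1
        _ ≤ C0 * l ^ α * G14 (l * r) :=
            mul_le_mul_of_nonneg_left (G14_lower hlr0) (by positivity)
        _ ≤ max 1 C0 * l ^ α * G14 (l * r) := by
            apply mul_le_mul_of_nonneg_right ?_ hGpos.le
            exact mul_le_mul_of_nonneg_right (le_max_right _ _) hlα.le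
    rw [h14_eq d hd r, h14_eq d hd (l * r), ← hcdef]
    calc c * G14 r ≤ c * (max 1 C0 * l ^ α * G14 (l * r)) :=
          mul_le_mul_of_nonneg_left H hc.le
      _ = max 1 C0 * l ^ α * (c * G14 (l * r)) := by ring
  · rintro ⟨C, hC1, hC⟩
    have hC0 : 0 < C := lt_of_lt_of_le one_pos hC1
    have hlog3 : (0:ℝ) < Real.log 3 := Real.log_pos (by norm_num)
    set l : ℝ := Real.exp (-(C * K * Real.log 3 + 1)) with hldef
    have hl0 : 0 < l := Real.exp_pos _
    have hl1 : l ≤ 1 := by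
      rw [hldef, Real.exp_le_one_iff]
      nlinarith [mul_pos (mul_pos hC0 hK) hlog3]
    have hll : Real.log l = -(C * K * Real.log 3 + 1) := Real.log_exp _
    have h := hC l ⟨hl0, hl1⟩ 1 ⟨one_pos, le_refl 1⟩
    rw [mul_one, Real.rpow_one, h14_eq d hd 1, h14_eq d hd l, ← hcdef] at h
    -- h : c * G14 1 ≤ C * l * (c * G14 l)
    have hG1 : phi14 1 / 1 ≤ G14 1 := G14_lower one_pos
    have hGl : G14 l ≤ K * (phi14 l / l) := G14_upper hl0
    have hKl : 0 < K * (phi14 l / l) := by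
      have := phi14_pos hl0
      positivity
    have step : c * (phi14 1 / 1) ≤ C * l * (c * (K * (phi14 l / l))) := by
      calc c * (phi14 1 / 1) ≤ c * G14 1 := mul_le_mul_of_nonneg_left hG1 hc.le
        _ ≤ C * l * (c * G14 l) := h
        _ ≤ C * l * (c * (K * (phi14 l / l))) := by
            apply mul_le_mul_of_nonneg_left ?_ (by positivity)
            exact mul_le_mul_of_nonneg_left hGl hc.le
    have step2 : phi14 1 ≤ C * K * phi14 l := by
      have e : C * l * (c * (K * (phi14 l / l))) = c * (C * K * phi14 l) := by
        field_simp
      rw [e, div_one] at step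
      exact le_of_mul_le_mul_left (by linarith) hc
    -- phi14 1 = 1 / log 3
    have e1 : phi14 1 = 1 / Real.log 3 := by unfold phi14; norm_num
    have hLl : 0 < Real.log (2 + 1 / l) := L_pos hl0
    have hLlb : C * K * Real.log 3 + 1 ≤ Real.log (2 + 1 / l) := by
      have : Real.log (1 / l) ≤ Real.log (2 + 1 / l) :=
        Real.log_le_log (by positivity) (by linarith)
      rw [Real.log_div one_ne_zero hl0.ne', Real.log_one, hll] at this
      linarith
    have final : Real.log (2 + 1 / l) ≤ C * K * Real.log 3 := by
      have := step2
      rw [e1] at this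
      unfold phi14 at this
      rw [mul_one_div, div_le_div_iff₀ hlog3 hLl] at this
      nlinarith
    linarith
end
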